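/- For a non-constant M ∈ F_q[x] coprime to b: β(M) := π(M)/α(M) divides 2·ord_M(−b), and π(M) equals either lcm(α(M), ord_M(−b)) or 2·lcm(α(M), ord_M(−b)). -/

import Mathlib

open Polynomial

noncomputable def genFib {K : Type*} [Field K] (a b : K[X]) : ℕ → K[X]
  | 0 => 0
  | 1 => 1
  | n + 2 => a * genFib a b (n + 1) + b * genFib a b n

noncomputable def fibRank {K : Type*} [Field K] (a b M : K[X]) : ℕ :=
  sInf {n : ℕ | 0 < n ∧ M ∣ genFib a b n}

noncomputable def fibPeriod {K : Type*} [Field K] (a b M : K[X]) : ℕ :=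
  sInf {n : ℕ | 0 < n ∧ M ∣ genFib a b n ∧ M ∣ (genFib a b (n + 1) - 1)}

noncomputable def polyOrd {K : Type*} [Field K] (M g : K[X]) : ℕ :=
  orderOf (Ideal.Quotient.mk (Ideal.span {M}) g)

lemma genFib_zero {K : Type*} [Field K] (a b : K[X]) : genFib a b 0 = 0 := rfl
lemma genFib_one {K : Type*} [Field K] (a b : K[X]) : genFib a b 1 = 1 := rfl
lemma genFib_add_two {K : Type*} [Field K] (a b : K[X]) (n : ℕ) :
    genFib a b (n + 2) = a * genFib a b (n + 1) + b * genFib a b n := rfl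

lemma genFib_add {K : Type*} [Field K] (a b : K[X]) (m n : ℕ) :
    genFib a b (m + n + 1) =
      genFib a b (m + 1) * genFib a b (n + 1) + b * genFib a b m * genFib a b n := by
  induction m using Nat.twoStepInduction generalizing n with
  | zero => simp [genFib_zero, genFib_one]
  | one =>
    rw [show 1 + n + 1 = n + 2 by omega, genFib_add_two,
      show (1:ℕ) + 1 = 2 by rfl, show (2:ℕ) = 0 + 2 by rfl, genFib_add_two,
      genFib_zero, genFib_one]
    ring
  | more m ih1 ih2 =>
    have e1 : genFib a b (m + 2 + n + 1)
        = a * genFib a b ((m + 1) + n + 1) + b * genFib a b (m + n + 1) := by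
      rw [show m + 2 + n + 1 = (m + n + 1) + 2 by omega, genFib_add_two,
        show m + n + 1 + 1 = (m + 1) + n + 1 by omega]
    rw [e1, ih2 n, ih1 n, show m + 2 + 1 = (m + 1) + 2 by omega, genFib_add_two a b (m+1),
      show m + 1 + 1 = m + 2 by omega, genFib_add_two a b m]
    ring

lemma genFib_cassini {K : Type*} [Field K] (a b : K[X]) (n : ℕ) :
    genFib a b (n + 2) * genFib a b n + (-b) ^ n = genFib a b (n + 1) ^ 2 := by
  induction n with
  | zero => simp [genFib_zero, genFib_one]
  | succ n ih =>
    rw [genFib_add_two a b n] at ih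
    rw [show n + 1 + 2 = (n + 1) + 2 by rfl, genFib_add_two a b (n+1), genFib_add_two a b n,
      pow_succ]
    linear_combination (-b) * ih

set_option maxHeartbeats 2000000 in
theorem stmt19 {K : Type*} [Field K] [Fintype K] (a b : K[X]) (hb : b ≠ 0)
    (M : K[X]) (hM : 0 < M.natDegree) (hco : IsCoprime b M) :
    (fibPeriod a b M / fibRank a b M) ∣ 2 * polyOrd M (-b) ∧
    (fibPeriod a b M = Nat.lcm (fibRank a b M) (polyOrd M (-b)) ∨
      fibPeriod a b M = 2 * Nat.lcm (fibRank a b M) (polyOrd M (-b))) := by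
  classical
  have hM0 : M ≠ 0 := fun h => by simp [h] at hM
  -- quotient ring is finite
  haveI hfinAR : Finite (AdjoinRoot M) := by
    haveI := (AdjoinRoot.powerBasis hM0).finite
    exact Module.finite_of_finite K
  haveI hfinR : Finite (K[X] ⧸ Ideal.span ({M} : Set K[X])) := hfinAR
  set φ := Ideal.Quotient.mk (Ideal.span ({M} : Set K[X])) with hφ
  set f : ℕ → K[X] ⧸ Ideal.span ({M} : Set K[X]) := fun n => φ (genFib a b n) with hf
  set A := φ a with hA
  set B := φ b with hB
  have hf0 : f 0 = 0 := by simp [hf, genFib_zero]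
  have hf1 : f 1 = 1 := by simp [hf, genFib_one]
  have hfrec : ∀ n, f (n + 2) = A * f (n + 1) + B * f n := by
    intro n
    simp [hf, genFib_add_two, map_add, map_mul, hA, hB]
  have hfadd : ∀ m n, f (m + n + 1) = f (m + 1) * f (n + 1) + B * f m * f n := by
    intro m n
    have := congrArg φ (genFib_add a b m n)
    simpa [hf, map_add, map_mul] using this
  have hcas : ∀ n, f (n + 2) * f n + (-B) ^ n = f (n + 1) ^ 2 := by
    intro n
    have := congrArg φ (genFib_cassini a b n)
    simpa [hf, map_add, map_mul, map_pow, map_neg] using this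
  -- B is a unit
  obtain ⟨u, v, huv⟩ := hco
  have hBunit : φ u * B = 1 := by
    have := congrArg φ huv
    have hMz : φ M = 0 := by
      rw [Ideal.Quotient.eq_zero_iff_dvd]
    simpa [map_add, map_mul, hMz] using this
  set Bu : (K[X] ⧸ Ideal.span ({M} : Set K[X]))ˣ :=
    Units.mkOfMulEqOne B (φ u) (by rw [mul_comm]; exact hBunit) with hBu
  have hBuval : (Bu : K[X] ⧸ Ideal.span ({M} : Set K[X])) = B := rfl
  set nB : (K[X] ⧸ Ideal.span ({M} : Set K[X]))ˣ := -Bu with hnB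
  have hnBval : (nB : K[X] ⧸ Ideal.span ({M} : Set K[X])) = -B := by
    simp [hnB, hBuval]
  -- existence of a period via a bijective step map
  set g : ((K[X] ⧸ Ideal.span ({M} : Set K[X])) × (K[X] ⧸ Ideal.span ({M} : Set K[X]))) ≃
      ((K[X] ⧸ Ideal.span ({M} : Set K[X])) × (K[X] ⧸ Ideal.span ({M} : Set K[X]))) :=
    { toFun := fun p => (p.2, A * p.2 + B * p.1)
      invFun := fun p => ((Bu⁻¹ : _) * (p.2 - A * p.1), p.1)
      left_inv := by
        intro p
        have h2 : (B : K[X] ⧸ Ideal.span ({M} : Set K[X])) * (Bu⁻¹ : _) = 1 := by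
          rw [← hBuval, Units.mul_inv]
        ext
        · simp only [mul_comm, mul_assoc, mul_left_comm]
          linear_combination p.1 * h2
        · rfl
      right_inv := by
        intro p
        have h2 : (B : K[X] ⧸ Ideal.span ({M} : Set K[X])) * (Bu⁻¹ : _) = 1 := by
          rw [← hBuval, Units.mul_inv]
        ext
        · rfl
        · simp only [mul_comm, mul_assoc, mul_left_comm]
          linear_combination (p.2 - p.1 * A) * h2 } with hg
  have hgpow : ∀ n, (g ^ n) (0, 1) = (f n, f (n + 1)) := by
    intro n
    induction n with
    | zero => simp [hf0, hf1]
    | succ n ih =>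
      rw [pow_succ', Equiv.Perm.mul_apply, ih]
      simp only [hg, Equiv.coe_fn_mk]
      exact Prod.ext rfl (hfrec n).symm
  -- membership translations
  have hmem : ∀ x : K[X], M ∣ x ↔ φ x = 0 := fun x => (Ideal.Quotient.eq_zero_iff_dvd M x).symm
  have hmem1 : ∀ x : K[X], M ∣ (x - 1) ↔ φ x = 1 := by
    intro x
    rw [hmem, map_sub, map_one, sub_eq_zero]
  -- existence of a full period
  have hNs := hgpow (orderOf g)
  rw [pow_orderOf_eq_one] at hNs
  have eN1 : f (orderOf g) = 0 := (congrArg Prod.fst hNs).symm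
  have eN2 : f (orderOf g + 1) = 1 := (congrArg Prod.snd hNs).symm
  have hNpos : 0 < orderOf g := orderOf_pos g
  set α := fibRank a b M with hαdef
  set π := fibPeriod a b M with hπdef
  have hSa_ne : {n : ℕ | 0 < n ∧ M ∣ genFib a b n}.Nonempty :=
    ⟨orderOf g, hNpos, (hmem _).mpr eN1⟩
  have hSp_ne : {n : ℕ | 0 < n ∧ M ∣ genFib a b n ∧ M ∣ (genFib a b (n + 1) - 1)}.Nonempty :=
    ⟨orderOf g, hNpos, (hmem _).mpr eN1, (hmem1 _).mpr eN2⟩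
  have hα_mem : 0 < α ∧ M ∣ genFib a b α := Nat.sInf_mem hSa_ne
  obtain ⟨hαpos, hαdvd⟩ := hα_mem
  have hfα : f α = 0 := (hmem _).mp hαdvd
  have hαmin : ∀ r : ℕ, 0 < r → f r = 0 → α ≤ r := fun r hr hfr =>
    Nat.sInf_le ⟨hr, (hmem _).mpr hfr⟩
  have hπ_mem : 0 < π ∧ M ∣ genFib a b π ∧ M ∣ (genFib a b (π + 1) - 1) :=
    Nat.sInf_mem hSp_ne
  obtain ⟨hπpos, hπdvd, hπdvd1⟩ := hπ_mem
  have hfπ : f π = 0 := (hmem _).mp hπdvd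
  have hfπ1 : f (π + 1) = 1 := (hmem1 _).mp hπdvd1
  obtain ⟨t, ht⟩ : ∃ t, α = t + 1 := ⟨α - 1, by omega⟩
  set c := f (α + 1) with hc
  have hcass_t : c * f t = -(-B) ^ t := by
    have h := hcas t
    rw [show t + 2 = α + 1 by omega, show t + 1 = α by omega, hfα] at h
    linear_combination h
  -- c is a unit
  have hcunit : c * (-(f t) * (((nB⁻¹ : _) : K[X] ⧸ Ideal.span ({M} : Set K[X]))) ^ t) = 1 := by
    have hmi : ((nB : _) : K[X] ⧸ Ideal.span ({M} : Set K[X])) * ((nB⁻¹ : _) : _) = 1 :=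
      nB.mul_inv
    calc c * (-(f t) * (((nB⁻¹ : _) : K[X] ⧸ Ideal.span ({M} : Set K[X]))) ^ t)
        = (-(c * f t)) * (((nB⁻¹ : _) : K[X] ⧸ Ideal.span ({M} : Set K[X]))) ^ t := by ring
      _ = (-B) ^ t * (((nB⁻¹ : _) : K[X] ⧸ Ideal.span ({M} : Set K[X]))) ^ t := by
          rw [hcass_t]; ring
      _ = (((nB : _) : K[X] ⧸ Ideal.span ({M} : Set K[X]))
            * ((nB⁻¹ : _) : K[X] ⧸ Ideal.span ({M} : Set K[X]))) ^ t := by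
          rw [mul_pow, hnBval]
      _ = 1 := by rw [hmi, one_pow]
  set cu : (K[X] ⧸ Ideal.span ({M} : Set K[X]))ˣ := Units.mkOfMulEqOne c _ hcunit with hcu
  have hcuval : (cu : K[X] ⧸ Ideal.span ({M} : Set K[X])) = c := rfl
  -- shift lemmas
  have hshift : ∀ k, f (α + k) = c * f k := by
    intro k
    cases k with
    | zero => rw [Nat.add_zero, hfα, hf0, mul_zero]
    | succ k =>
      have h := hfadd α k
      rw [hfα, mul_zero, zero_mul, add_zero] at h
      exact h
  have hshiftq : ∀ q k, f (q * α + k) = c ^ q * f k := by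
    intro q
    induction q with
    | zero => intro k; simp
    | succ q ih =>
      intro k
      rw [show (q + 1) * α + k = α + (q * α + k) by ring, hshift, ih]
      ring
  have hrank_dvd : ∀ n, f n = 0 → α ∣ n := by
    intro n hn
    have hdm : n / α * α + n % α = n := by
      rw [mul_comm]; exact Nat.div_add_mod n α
    have h1 : f n = c ^ (n / α) * f (n % α) := by rw [← hshiftq (n / α) (n % α), hdm]
    have h2 : f (n % α) = 0 := by
      rw [h1] at hn
      have hcup : c ^ (n / α) = ((cu ^ (n / α) : _) : K[X] ⧸ Ideal.span ({M} : Set K[X])) := by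
        rw [Units.val_pow_eq_pow_val, hcuval]
      rw [hcup] at hn
      exact (Units.mul_right_eq_zero _).mp hn
    have hmod : n % α = 0 := by
      by_contra hne
      have hlt : n % α < α := Nat.mod_lt _ hαpos
      have := hαmin (n % α) (Nat.pos_of_ne_zero hne) h2
      omega
    exact Nat.dvd_of_mod_eq_zero hmod
  obtain ⟨q, hq⟩ := hrank_dvd π hfπ
  have hcq : c ^ q = 1 := by
    have h := hshiftq q 1
    rw [hf1, mul_one, show q * α + 1 = π + 1 by rw [hq]; ring, hfπ1] at h
    exact h.symm
  have hcuq : cu ^ q = 1 := by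
    apply Units.ext
    rw [Units.val_pow_eq_pow_val, hcuval, hcq, Units.val_one]
  set d := orderOf cu with hd
  have hdq : d ∣ q := orderOf_dvd_of_pow_eq_one hcuq
  have hdpos : 0 < d := orderOf_pos cu
  have hcd : c ^ d = 1 := by
    have h := pow_orderOf_eq_one cu
    calc c ^ d = ((cu ^ d : _) : K[X] ⧸ Ideal.span ({M} : Set K[X])) := by
          rw [Units.val_pow_eq_pow_val, hcuval]
      _ = 1 := by rw [h, Units.val_one]
  have hπle : π ≤ α * d := by
    apply Nat.sInf_le
    refine ⟨Nat.mul_pos hαpos hdpos, ?_, ?_⟩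
    · apply (hmem _).mpr
      have h := hshiftq d 0
      rw [hf0, mul_zero, Nat.add_zero] at h
      rw [show (genFib a b (α * d)) = genFib a b (d * α) by rw [mul_comm]]
      exact h
    · apply (hmem1 _).mpr
      have h := hshiftq d 1
      rw [hf1, mul_one, hcd] at h
      rw [show α * d + 1 = d * α + 1 by ring]
      exact h
  have hπeq : π = α * d := by
    have h1 : α * d ∣ π := by rw [hq]; exact mul_dvd_mul_left α hdq
    exact le_antisymm hπle (Nat.le_of_dvd hπpos h1)
  -- c ^ 2 = (-B) ^ α
  have hcB : c = B * f t := by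
    have h := hfrec t
    rw [show t + 2 = α + 1 by omega, show t + 1 = α by omega, hfα, mul_zero, zero_add] at h
    exact h
  have hc2 : c * c = (-B) ^ α := by
    calc c * c = B * (c * f t) := by rw [hcB]; ring
      _ = B * (-(-B) ^ t) := by rw [hcass_t]
      _ = (-B) ^ α := by rw [ht, pow_succ]; ring
  have hcu2 : cu ^ 2 = nB ^ α := by
    apply Units.ext
    rw [Units.val_pow_eq_pow_val, Units.val_pow_eq_pow_val, hnBval, hcuval, pow_two]
    exact hc2
  set e := orderOf nB with he
  have hepos : 0 < e := orderOf_pos nB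
  have hpoly : polyOrd M (-b) = e := by
    have hval : (Ideal.Quotient.mk (Ideal.span ({M} : Set K[X])) (-b) : _)
        = ((nB : _) : K[X] ⧸ Ideal.span ({M} : Set K[X])) := by
      rw [hnBval, hB, hφ, map_neg]
    rw [polyOrd, hval, orderOf_units]
  have hdvd2e : d ∣ 2 * e := by
    apply orderOf_dvd_of_pow_eq_one
    calc cu ^ (2 * e) = (cu ^ 2) ^ e := by rw [← pow_mul]
      _ = (nB ^ α) ^ e := by rw [hcu2]
      _ = (nB ^ e) ^ α := by rw [← pow_mul, mul_comm, pow_mul]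
      _ = 1 := by rw [pow_orderOf_eq_one, one_pow]
  have hβ : π / α = d := by rw [hπeq, Nat.mul_div_cancel_left _ hαpos]
  constructor
  · rw [hβ, hpoly]
    exact hdvd2e
  · have hord2 : orderOf (cu ^ 2) = d / Nat.gcd d 2 := by rw [orderOf_pow, hd]
    have horde : orderOf (nB ^ α) = e / Nat.gcd e α := by rw [orderOf_pow, he]
    have hs : d / Nat.gcd d 2 = e / Nat.gcd e α := by rw [← hord2, hcu2, horde]
    have hlcm : Nat.lcm α e = α * (e / Nat.gcd e α) := by
      rw [Nat.lcm, Nat.gcd_comm α e, Nat.mul_div_assoc α (Nat.gcd_dvd_left e α)]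
    have hg2 : Nat.gcd d 2 = 1 ∨ Nat.gcd d 2 = 2 :=
      (Nat.dvd_prime Nat.prime_two).mp (Nat.gcd_dvd_right d 2)
    rcases hg2 with hcase | hcase
    · left
      rw [hcase, Nat.div_one] at hs
      rw [hπeq, hpoly, hlcm, hs]
    · right
      have h2d : 2 ∣ d := hcase ▸ Nat.gcd_dvd_left d 2
      have hd2s : d = 2 * (e / Nat.gcd e α) := by
        rw [hcase] at hs
        omega
      rw [hπeq, hpoly, hlcm, hd2s]
      ring
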